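/- For c = 1 (the all-ones vector) and an integer k = qn + r with q ∈ Z and r ∈ {0,1,...,n−1}, the set of core points in the k-th 1-layer (integral points of H_{1,k} minimizing distance to the center (k/n)·1) consists exactly of the integer vectors with r coordinates equal to q+1 and n−r coordinates equal to q; there are C(n,r) of them, and they are the vertices of the (r,n)-hypersimplex translated by q·1. -/

import Mathlib

private lemma sq_self_nonneg_int (z : ℤ) : 0 ≤ z ^ 2 - z := by
  rcases le_or_gt z 0 with h | h
  · nlinarith [sq_nonneg z]
  · have h1 : 1 ≤ z := h
    nlinarith

theorem core_points_of_one_layer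
    (n : ℕ) (hn : 0 < n) (q : ℤ) (r : ℕ) (hr : r < n) (k : ℤ) (hk : k = q * n + r)
    (Core : Set (Fin n → ℤ))
    (hCore : Core = {x | (∑ i, x i) = k ∧
        ∀ y : Fin n → ℤ, (∑ i, y i) = k →
          ∑ i, ((x i : ℝ) - (k : ℝ) / (n : ℝ)) ^ 2
            ≤ ∑ i, ((y i : ℝ) - (k : ℝ) / (n : ℝ)) ^ 2}) :
    Core = {x | ∃ S : Finset (Fin n), S.card = r ∧
        x = fun i => q + if i ∈ S then 1 else 0} ∧
    Core.ncard = Nat.choose n r := by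
  have hn' : (n : ℝ) ≠ 0 := Nat.cast_ne_zero.mpr hn.ne'
  set M : ℤ := (r : ℤ) + 2 * q * k - n * q ^ 2 with hM
  -- distance formula
  have hdist : ∀ x : Fin n → ℤ, (∑ i, x i) = k →
      ∑ i, ((x i : ℝ) - (k : ℝ) / (n : ℝ)) ^ 2
        = ((∑ i, (x i) ^ 2 : ℤ) : ℝ) - (k : ℝ) ^ 2 / n := by
    intro x hx
    have hxr : (∑ i, ((x i : ℤ) : ℝ)) = (k : ℝ) := by
      rw [← Int.cast_sum, hx]
    have h1 : ∑ i, ((x i : ℝ) - (k : ℝ) / n) ^ 2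
        = ∑ i, (((x i : ℝ)) ^ 2 - 2 * ((k : ℝ) / n) * (x i) + ((k : ℝ) / n) ^ 2) := by
      refine Finset.sum_congr rfl fun i _ => by ring
    rw [h1, Finset.sum_add_distrib, Finset.sum_sub_distrib, ← Finset.mul_sum, hxr,
      Finset.sum_const, Finset.card_univ, Fintype.card_fin]
    push_cast
    field_simp
    ring_nf
    field_simp
    ring
  -- expansion of the key sum
  have hexp : ∀ x : Fin n → ℤ, (∑ i, x i) = k →
      ∑ i, ((x i - q) ^ 2 - (x i - q)) = (∑ i, (x i) ^ 2) - M := by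
    intro x hx
    have h1 : ∑ i, ((x i - q) ^ 2 - (x i - q))
        = ∑ i, ((x i) ^ 2 - (2 * q + 1) * (x i) + (q ^ 2 + q)) := by
      refine Finset.sum_congr rfl fun i _ => by ring
    rw [h1, Finset.sum_add_distrib, Finset.sum_sub_distrib, ← Finset.mul_sum, hx,
      Finset.sum_const, Finset.card_univ, Fintype.card_fin]
    have hrk : (r : ℤ) = k - q * n := by omega
    simp only [nsmul_eq_mul, hM, hrk]
    ring
  -- lower bound
  have hlow : ∀ x : Fin n → ℤ, (∑ i, x i) = k → M ≤ ∑ i, (x i) ^ 2 := by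
    intro x hx
    have h0 : 0 ≤ ∑ i, ((x i - q) ^ 2 - (x i - q)) :=
      Finset.sum_nonneg fun i _ => sq_self_nonneg_int _
    rw [hexp x hx] at h0
    omega
  -- candidates achieve the bound
  have hcand : ∀ S : Finset (Fin n), S.card = r →
      (∑ i, (q + if i ∈ S then 1 else 0)) = k ∧
      (∑ i, (q + if i ∈ S then (1 : ℤ) else 0) ^ 2) = M := by
    intro S hS
    have hsum1 : (∑ i, (if i ∈ S then (1 : ℤ) else 0)) = (r : ℤ) := by
      rw [Finset.sum_ite_mem, Finset.univ_inter, Finset.sum_const, hS]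
      simp
    constructor
    · rw [Finset.sum_add_distrib, hsum1, Finset.sum_const, Finset.card_univ,
        Fintype.card_fin]
      simp [hk, mul_comm]
    · have h2 : ∀ i, (q + if i ∈ S then (1 : ℤ) else 0) ^ 2
          = q ^ 2 + (2 * q + 1) * (if i ∈ S then (1 : ℤ) else 0) := by
        intro i; by_cases h : i ∈ S <;> simp [h] <;> ring
      rw [Finset.sum_congr rfl fun i _ => h2 i, Finset.sum_add_distrib,
        ← Finset.mul_sum, hsum1, Finset.sum_const, Finset.card_univ, Fintype.card_fin]
      simp only [nsmul_eq_mul, hM, hk]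
      ring
  -- Core equals the image of r-subsets
  have hmain : Core = {x | ∃ S : Finset (Fin n), S.card = r ∧
      x = fun i => q + if i ∈ S then 1 else 0} := by
    rw [hCore]
    ext x
    simp only [Set.mem_setOf_eq]
    constructor
    · rintro ⟨hx, hmin⟩
      -- pick a witness candidate
      obtain ⟨S0, -, hS0⟩ := Finset.exists_subset_card_eq (s := (Finset.univ : Finset (Fin n))) (n := r)
        (by simp [Fintype.card_fin]; omega)
      obtain ⟨hc1, hc2⟩ := hcand S0 hS0
      have hle := hmin _ hc1
      rw [hdist x hx, hdist _ hc1, hc2, sub_le_sub_iff_right, Int.cast_le] at hle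
      -- so sum of squares equals M
      have hge := hlow x hx
      have heq : (∑ i, (x i) ^ 2) = M := le_antisymm hle hge
      have hzero : ∑ i, ((x i - q) ^ 2 - (x i - q)) = 0 := by
        rw [hexp x hx, heq]; ring
      have hterm : ∀ i ∈ Finset.univ, (x i - q) ^ 2 - (x i - q) = 0 := by
        rw [← Finset.sum_eq_zero_iff_of_nonneg fun i _ => sq_self_nonneg_int (x i - q)]
        exact hzero
      have h01 : ∀ i, x i = q ∨ x i = q + 1 := by
        intro i
        have h := hterm i (Finset.mem_univ i)
        have h2 : (x i - q) * ((x i - q) - 1) = 0 := by linear_combination h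
        rcases mul_eq_zero.mp h2 with h3 | h3 <;> omega
      refine ⟨Finset.univ.filter (fun i => x i = q + 1), ?_, ?_⟩
      · -- card = r : sum of indicators
        have hsum : (∑ i, (x i - q)) = (r : ℤ) := by
          rw [Finset.sum_sub_distrib, hx, Finset.sum_const, Finset.card_univ,
            Fintype.card_fin]
          simp [hk]; ring
        have hind : (∑ i, (x i - q))
            = ((Finset.univ.filter (fun i => x i = q + 1)).card : ℤ) := by
          rw [Finset.card_filter]
          push_cast
          refine Finset.sum_congr rfl fun i _ => ?_
          rcases h01 i with h | h <;> simp [h] <;> omega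
        rw [hind] at hsum
        exact_mod_cast hsum
      · funext i
        rcases h01 i with h | h <;> simp [h, Finset.mem_filter] <;> omega
    · rintro ⟨S, hS, rfl⟩
      obtain ⟨hc1, hc2⟩ := hcand S hS
      refine ⟨hc1, fun y hy => ?_⟩
      rw [hdist _ hc1, hdist y hy, hc2, sub_le_sub_iff_right, Int.cast_le]
      exact hlow y hy
  refine ⟨hmain, ?_⟩
  -- cardinality
  have hT : {x : Fin n → ℤ | ∃ S : Finset (Fin n), S.card = r ∧
      x = fun i => q + if i ∈ S then 1 else 0}
      = ↑((Finset.univ.powersetCard r).image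
          (fun S : Finset (Fin n) => fun i => q + if i ∈ S then (1 : ℤ) else 0)) := by
    ext x
    simp only [Set.mem_setOf_eq, Finset.coe_image, Set.mem_image, Finset.mem_coe,
      Finset.mem_powersetCard_univ]
    constructor
    · rintro ⟨S, hS, rfl⟩; exact ⟨S, hS, rfl⟩
    · rintro ⟨S, hS, rfl⟩; exact ⟨S, hS, rfl⟩
  rw [hmain, hT, Set.ncard_coe_finset, Finset.card_image_of_injOn, 
    Finset.card_powersetCard, Finset.card_univ, Fintype.card_fin]
  intro S hS T hT' hST
  ext i
  have := congrFun hST i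
  by_cases h1 : i ∈ S <;> by_cases h2 : i ∈ T <;> simp [h1, h2] at this ⊢
  all_goals omega
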